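/- Let f and g be tropical polynomials in n variables with Trop(f) ⊆ Trop(g), and let v be a vertex (extreme point) of the Newton polyhedron N(g). Then there exists a unique point u ∈ N(f) such that for every x ∈ ℝⁿ for which the linear functional φ_x attains its minimum over N(g) at v and at no other point of N(g), the functional φ_x attains its minimum over N(f) at u and at no other point of N(f). In particular, the minimizing point of φ_x on N(f) is the same for all such x. -/

import Mathlib

open Finset

/-- A tropical polynomial in `n` variables: `k ≥ 1` monomials with exponent
vectors `a i : Fin n → ℕ` and coefficients `c i : ℝ`, the pairs `(a i, c i)`
being pairwise distinct. -/
structure TropPoly (n : ℕ) where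
  k : ℕ
  hk : 0 < k
  a : Fin k → Fin n → ℕ
  c : Fin k → ℝ
  distinct : Function.Injective (fun i => (a i, c i))

namespace TropPoly

variable {n : ℕ}

/-- Value of the `i`-th tropical monomial at `x`: `⟨a i, x⟩ + c i`. -/
def mono (f : TropPoly n) (i : Fin f.k) (x : Fin n → ℝ) : ℝ :=
  (∑ j, (f.a i j : ℝ) * x j) + f.c i

/-- Value of the tropical polynomial: `f(x) = min_i (⟨a i, x⟩ + c i)`. -/
def eval (f : TropPoly n) (x : Fin n → ℝ) : ℝ :=
  Finset.univ.inf' ⟨⟨0, f.hk⟩, Finset.mem_univ _⟩ (fun i => f.mono i x)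

/-- The tropical hypersurface `Trop(f)`: points where the minimum is attained
at least at two distinct monomials. -/
def tropSet (f : TropPoly n) : Set (Fin n → ℝ) :=
  {x | ∃ i j : Fin f.k, i ≠ j ∧ f.mono i x = f.eval x ∧ f.mono j x = f.eval x}

/-- The Newton polyhedron `N(f) ⊆ ℝ^{n+1}`: the convex hull of the union of
the vertical rays `{(a i, c) : c ≥ c i}`. -/
def newton (f : TropPoly n) : Set ((Fin n → ℝ) × ℝ) :=
  convexHull ℝ {p | ∃ i : Fin f.k, p.1 = (fun j => (f.a i j : ℝ)) ∧ f.c i ≤ p.2}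

end TropPoly

/-- The linear functional `φ_x(z, a) = ⟨x, z⟩ + a` on `ℝ^{n+1}`. -/
def phi {n : ℕ} (x : Fin n → ℝ) (p : (Fin n → ℝ) × ℝ) : ℝ :=
  (∑ j, x j * p.1 j) + p.2

/-- The convex cone generated by a set `S`: all nonnegative linear
combinations of elements of `S`. -/
def coneGen {E : Type*} [AddCommMonoid E] [Module ℝ E] (S : Set E) : Set E :=
  {y | ∃ (m : ℕ) (t : Fin m → ℝ) (p : Fin m → E),
    (∀ i, 0 ≤ t i) ∧ (∀ i, p i ∈ S) ∧ y = ∑ i, t i • p i}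

namespace TropPoly

variable {n : ℕ}

/-- Generator set of the Newton polyhedron. -/
def gens (f : TropPoly n) : Set ((Fin n → ℝ) × ℝ) :=
  {p | ∃ i : Fin f.k, p.1 = (fun j => (f.a i j : ℝ)) ∧ f.c i ≤ p.2}

lemma newton_eq (f : TropPoly n) : f.newton = convexHull ℝ f.gens := rfl

/-- The point of the Newton polyhedron corresponding to the `i`-th monomial. -/
noncomputable def pt (f : TropPoly n) (i : Fin f.k) : (Fin n → ℝ) × ℝ :=
  ((fun j => (f.a i j : ℝ)), f.c i)

lemma pt_mem_gens (f : TropPoly n) (i : Fin f.k) : f.pt i ∈ f.gens :=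
  ⟨i, rfl, le_refl _⟩

lemma pt_mem_newton (f : TropPoly n) (i : Fin f.k) : f.pt i ∈ f.newton :=
  subset_convexHull ℝ _ (f.pt_mem_gens i)

lemma pt_inj (f : TropPoly n) {i j : Fin f.k} (h : f.pt i = f.pt j) : i = j := by
  apply f.distinct
  have h1 : (f.pt i).1 = (f.pt j).1 := by rw [h]
  have h2 : (f.pt i).2 = (f.pt j).2 := by rw [h]
  simp only [pt] at h1 h2
  have ha : f.a i = f.a j := by
    funext m
    have := congrFun h1 m
    exact_mod_cast this
  simp only [Prod.mk.injEq]
  exact ⟨ha, h2⟩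

lemma phi_pt (f : TropPoly n) (x : Fin n → ℝ) (i : Fin f.k) :
    phi x (f.pt i) = f.mono i x := by
  simp only [phi, pt, mono]
  congr 1
  exact Finset.sum_congr rfl fun j _ => mul_comm _ _

lemma eval_le_mono (f : TropPoly n) (x : Fin n → ℝ) (i : Fin f.k) :
    f.eval x ≤ f.mono i x :=
  Finset.inf'_le _ (Finset.mem_univ i)

lemma exists_eval_eq (f : TropPoly n) (x : Fin n → ℝ) :
    ∃ i, f.eval x = f.mono i x := by
  obtain ⟨i, _, hi⟩ := Finset.exists_mem_eq_inf' (⟨⟨0, f.hk⟩, Finset.mem_univ _⟩ :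
    (Finset.univ : Finset (Fin f.k)).Nonempty) (fun i => f.mono i x)
  exact ⟨i, hi⟩

end TropPoly

section PhiLinear

variable {n : ℕ}

lemma phi_add (x : Fin n → ℝ) (p q : (Fin n → ℝ) × ℝ) :
    phi x (p + q) = phi x p + phi x q := by
  simp only [phi, Prod.fst_add, Prod.snd_add, Pi.add_apply, mul_add,
    Finset.sum_add_distrib]
  ring

lemma phi_smul (x : Fin n → ℝ) (t : ℝ) (p : (Fin n → ℝ) × ℝ) :
    phi x (t • p) = t * phi x p := by
  simp only [phi, Prod.smul_fst, Prod.smul_snd, Pi.smul_apply, smul_eq_mul,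
    mul_add, Finset.mul_sum]
  ring_nf
  congr 1
  exact Finset.sum_congr rfl fun j _ => by ring

lemma phi_combo (x : Fin n → ℝ) (a b : ℝ) (p q : (Fin n → ℝ) × ℝ) :
    phi x (a • p + b • q) = a * phi x p + b * phi x q := by
  rw [phi_add, phi_smul, phi_smul]

end PhiLinear

namespace TropPoly

variable {n : ℕ}

/-- Lower bound over the Newton polyhedron from a lower bound over the generators. -/
lemma le_phi_newton (f : TropPoly n) (x : Fin n → ℝ) {m : ℝ}
    (hm : ∀ p ∈ f.gens, m ≤ phi x p) : ∀ q ∈ f.newton, m ≤ phi x q := by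
  intro q hq
  have hconv : Convex ℝ {p : (Fin n → ℝ) × ℝ | m ≤ phi x p} := by
    intro p hp r hr a b ha hb hab
    simp only [Set.mem_setOf_eq] at hp hr ⊢
    rw [phi_combo]
    have h3 : a * m + b * m = m := by linear_combination m * hab
    linarith [mul_le_mul_of_nonneg_left hp ha, mul_le_mul_of_nonneg_left hr hb]
  exact convexHull_min hm hconv hq

/-- phi of a generator with index `i` is at least `mono i x`. -/
lemma mono_le_phi_gen (f : TropPoly n) (x : Fin n → ℝ) {p : (Fin n → ℝ) × ℝ}
    {i : Fin f.k} (h1 : p.1 = (fun j => (f.a i j : ℝ))) (h2 : f.c i ≤ p.2) :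
    f.mono i x ≤ phi x p := by
  have : phi x p = (∑ j, x j * (f.a i j : ℝ)) + p.2 := by
    simp only [phi, h1]
  rw [this, mono]
  have : (∑ j, x j * (f.a i j : ℝ)) = ∑ j, (f.a i j : ℝ) * x j :=
    Finset.sum_congr rfl fun j _ => mul_comm _ _
  linarith [this.ge]

/-- If the `i0`-th monomial is the strict minimizer at `x`, then `phi x` attains its
minimum over the Newton polyhedron at `pt i0` and nowhere else. -/
lemma strict_min_newton (f : TropPoly n) {x : Fin n → ℝ} {i0 : Fin f.k}
    (hs : ∀ j, j ≠ i0 → f.mono i0 x < f.mono j x) :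
    (∀ q ∈ f.newton, phi x (f.pt i0) ≤ phi x q) ∧
    (∀ q ∈ f.newton, phi x q ≤ phi x (f.pt i0) → q = f.pt i0) := by
  set m := f.mono i0 x with hm
  have hmono_ge : ∀ i : Fin f.k, m ≤ f.mono i x := by
    intro i
    by_cases hi : i = i0
    · subst hi; exact le_rfl
    · exact (hs i hi).le
  have hgens : ∀ p ∈ f.gens, m ≤ phi x p := by
    rintro p ⟨i, h1, h2⟩
    exact le_trans (hmono_ge i) (f.mono_le_phi_gen x h1 h2)
  have hpt : phi x (f.pt i0) = m := f.phi_pt x i0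
  constructor
  · intro q hq
    rw [hpt]
    exact f.le_phi_newton x hgens q hq
  -- strict part
  have hT : Convex ℝ ({p : (Fin n → ℝ) × ℝ | m < phi x p} ∪ {f.pt i0}) := by
    intro p hp q hq a b ha hb hab
    rcases eq_or_lt_of_le ha with ha0 | ha0
    · have hb1 : b = 1 := by linarith
      have : a • p + b • q = q := by rw [← ha0, hb1]; simp
      rwa [this]
    rcases eq_or_lt_of_le hb with hb0 | hb0
    · have ha1 : a = 1 := by linarith
      have : a • p + b • q = p := by rw [← hb0, ha1]; simp
      rwa [this]
    have key : ∀ r : (Fin n → ℝ) × ℝ,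
        r ∈ ({p : (Fin n → ℝ) × ℝ | m < phi x p} ∪ {f.pt i0}) → m ≤ phi x r := by
      rintro r (hr | hr)
      · exact hr.le
      · simp only [Set.mem_singleton_iff] at hr; rw [hr, hpt]
    rcases hp with hp | hp
    · left
      simp only [Set.mem_setOf_eq] at hp ⊢
      rw [phi_combo]
      have h3 : a * m + b * m = m := by linear_combination m * hab
      linarith [mul_lt_mul_of_pos_left hp ha0, mul_le_mul_of_nonneg_left (key q hq) hb]
    · rcases hq with hq | hq
      · left
        simp only [Set.mem_setOf_eq] at hq ⊢
        rw [phi_combo]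
        simp only [Set.mem_singleton_iff] at hp
        rw [hp, hpt]
        have h3 : a * m + b * m = m := by linear_combination m * hab
        linarith [mul_lt_mul_of_pos_left hq hb0]
      · right
        simp only [Set.mem_singleton_iff] at hp hq ⊢
        rw [hp, hq, ← add_smul, hab, one_smul]
  have hsub : f.gens ⊆ ({p : (Fin n → ℝ) × ℝ | m < phi x p} ∪ {f.pt i0}) := by
    rintro p ⟨i, h1, h2⟩
    by_cases hi : i = i0
    · subst hi
      rcases eq_or_lt_of_le h2 with h2' | h2'
      · right
        simp only [Set.mem_singleton_iff]
        ext
        · rw [h1]; rfl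
        · exact h2'.symm
      · left
        have : phi x p = (∑ j, x j * (f.a i j : ℝ)) + p.2 := by simp only [phi, h1]
        have hmpt : m = (∑ j, x j * (f.a i j : ℝ)) + f.c i := by
          rw [← hpt]; simp only [phi, pt]
        simp only [Set.mem_setOf_eq]
        rw [this, hmpt]
        linarith
    · left
      exact lt_of_lt_of_le (hs i hi) (f.mono_le_phi_gen x h1 h2)
  have hhull := convexHull_min hsub hT
  intro q hq hle
  rcases hhull hq with hq' | hq'
  · exfalso
    simp only [Set.mem_setOf_eq] at hq'
    rw [hpt] at hle
    linarith
  · exact hq'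

end TropPoly

namespace TropPoly

variable {n : ℕ}

/-- Strict minimality at `i0` implies `x` is not on the tropical hypersurface. -/
lemma not_trop_of_strict (f : TropPoly n) {x : Fin n → ℝ} {i0 : Fin f.k}
    (hs : ∀ j, j ≠ i0 → f.mono i0 x < f.mono j x) : x ∉ f.tropSet := by
  rintro ⟨i, j, hij, hi, hj⟩
  have key : ∀ m : Fin f.k, f.mono m x = f.eval x → m = i0 := by
    intro m hmx
    by_contra hm
    have h1 := hs m hm
    have h2 := f.eval_le_mono x i0
    rw [hmx] at h1
    linarith
  exact hij ((key i hi).trans (key j hj).symm)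

/-- Off the tropical hypersurface there is a unique strict minimizer. -/
lemma exists_strict_argmin (f : TropPoly n) {x : Fin n → ℝ} (hx : x ∉ f.tropSet) :
    ∃ i, ∀ j, j ≠ i → f.mono i x < f.mono j x := by
  obtain ⟨i, hi⟩ := f.exists_eval_eq x
  refine ⟨i, fun j hj => ?_⟩
  rcases eq_or_lt_of_le (hi ▸ f.eval_le_mono x j) with heq | hlt
  · exact absurd ⟨j, i, hj, heq ▸ hi.symm ▸ rfl, hi.symm⟩ hx
  · rw [← hi] at hlt ⊢; exact hi ▸ hlt

/-- `mono` is affine in `x`. -/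
lemma mono_affine (f : TropPoly n) (i : Fin f.k) (x y : Fin n → ℝ) {a b : ℝ}
    (hab : a + b = 1) :
    f.mono i (a • x + b • y) = a * f.mono i x + b * f.mono i y := by
  simp only [mono, Pi.add_apply, Pi.smul_apply, smul_eq_mul, mul_add, add_mul,
    Finset.sum_add_distrib, Finset.mul_sum]
  have h1 : ∀ j ∈ (Finset.univ : Finset (Fin n)), (f.a i j : ℝ) * (a * x j) = a * ((f.a i j : ℝ) * x j) := fun j _ => by ring
  have h2 : ∀ j ∈ (Finset.univ : Finset (Fin n)), (f.a i j : ℝ) * (b * y j) = b * ((f.a i j : ℝ) * y j) := fun j _ => by ring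
  rw [Finset.sum_congr rfl h1, Finset.sum_congr rfl h2]
  linear_combination f.c i * hab.symm

/-- An extreme point of the Newton polyhedron is one of the generating vertices. -/
lemma extreme_eq_pt (g : TropPoly n) {v : (Fin n → ℝ) × ℝ}
    (hv : v ∈ Set.extremePoints ℝ g.newton) : ∃ i0 : Fin g.k, v = g.pt i0 := by
  obtain ⟨i, h1, h2⟩ := extremePoints_convexHull_subset hv
  refine ⟨i, ?_⟩
  rcases eq_or_lt_of_le h2 with heq | hlt
  · ext
    · rw [h1]; rfl
    · exact heq.symm
  · exfalso
    set p1 : (Fin n → ℝ) × ℝ := (v.1, g.c i) with hp1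
    set p2 : (Fin n → ℝ) × ℝ := (v.1, 2 * v.2 - g.c i) with hp2
    have hp1m : p1 ∈ g.newton := subset_convexHull ℝ _ ⟨i, h1, le_refl _⟩
    have hp2m : p2 ∈ g.newton := subset_convexHull ℝ _ ⟨i, h1, by simp [hp2]; linarith⟩
    have hseg : v ∈ openSegment ℝ p1 p2 := by
      refine ⟨1/2, 1/2, by norm_num, by norm_num, by norm_num, ?_⟩
      have hfst : ((1/2 : ℝ) • p1 + (1/2 : ℝ) • p2).1 = v.1 := by
        simp only [Prod.fst_add, Prod.smul_fst, hp1, hp2]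
        module
      have hsnd : ((1/2 : ℝ) • p1 + (1/2 : ℝ) • p2).2 = v.2 := by
        simp only [Prod.snd_add, Prod.smul_snd, hp1, hp2, smul_eq_mul]
        ring
      exact Prod.ext hfst hsnd
    have := hv.2 hp1m hp2m hseg
    have : p1.2 = v.2 := by rw [this]
    simp only [hp1] at this
    linarith

end TropPoly

namespace TropPoly

variable {n : ℕ}

/-- An extreme point of `N(g)` is strictly exposed by some functional `phi x`. -/
lemma exists_exposing (g : TropPoly n) {i0 : Fin g.k}
    (hv : g.pt i0 ∈ Set.extremePoints ℝ g.newton) :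
    ∃ x0 : Fin n → ℝ, ∀ j, j ≠ i0 → g.mono i0 x0 < g.mono j x0 := by
  classical
  set v := g.pt i0 with hvdef
  set e : (Fin n → ℝ) × ℝ := ((0 : Fin n → ℝ), (1 : ℝ)) with he
  set F : Set ((Fin n → ℝ) × ℝ) :=
    insert (v + e) {p | ∃ j : Fin g.k, j ≠ i0 ∧ p = g.pt j} with hF
  have hFfin : F.Finite := by
    apply Set.Finite.insert
    apply Set.Finite.subset (Set.finite_range g.pt)
    rintro p ⟨j, _, rfl⟩
    exact ⟨j, rfl⟩
  have hFsub : F ⊆ g.newton \ {v} := by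
    rintro p (rfl | ⟨j, hj, rfl⟩)
    · constructor
      · apply subset_convexHull ℝ _
        refine ⟨i0, ?_, ?_⟩
        · show (v + e).1 = _
          simp [hvdef, he, pt]
        · show g.c i0 ≤ (v + e).2
          simp [hvdef, he, pt]
      · simp only [Set.mem_singleton_iff]
        intro hcontra
        have : (v + e).2 = v.2 := by rw [hcontra]
        simp [he] at this
    · refine ⟨g.pt_mem_newton j, ?_⟩
      simp only [Set.mem_singleton_iff]
      intro hcontra
      exact hj (g.pt_inj hcontra)
  have hvnot : v ∉ convexHull ℝ F := by
    have h1 : v ∈ g.newton \ convexHull ℝ (g.newton \ {v}) :=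
      ((convex_convexHull ℝ _).mem_extremePoints_iff_mem_diff_convexHull_diff).1 hv
    intro hcontra
    exact h1.2 (convexHull_mono hFsub hcontra)
  obtain ⟨l, u, hlv, hlF⟩ := geometric_hahn_banach_point_closed
    (convex_convexHull ℝ F) (hFfin.isClosed_convexHull (𝕜 := ℝ)) hvnot
  have hve : v + e ∈ convexHull ℝ F := subset_convexHull ℝ _ (Set.mem_insert _ _)
  have hs : 0 < l e := by
    have h1 := hlF _ hve
    rw [map_add] at h1
    linarith
  set s := l e with hsdef
  set x0 : Fin n → ℝ := fun j => l ((Pi.single j 1 : Fin n → ℝ), (0 : ℝ)) / s with hx0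
  have hrep : ∀ p : (Fin n → ℝ) × ℝ, phi x0 p = l p / s := by
    intro p
    have hdecomp : p = (∑ j, p.1 j • (((Pi.single j 1 : Fin n → ℝ), (0:ℝ)) : (Fin n → ℝ) × ℝ)) + p.2 • e := by
      have hfst : (∑ j, p.1 j • (((Pi.single j 1 : Fin n → ℝ), (0:ℝ)) : (Fin n → ℝ) × ℝ)).1 = p.1 := by
        rw [Prod.fst_sum]
        simp only [Prod.smul_fst]
        funext m
        rw [Finset.sum_apply]
        simp [Pi.single_apply, Finset.sum_ite_eq', mul_comm]
      have hsnd : (∑ j, p.1 j • (((Pi.single j 1 : Fin n → ℝ), (0:ℝ)) : (Fin n → ℝ) × ℝ)).2 = 0 := by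
        rw [Prod.snd_sum]
        simp
      apply Prod.ext
      · rw [Prod.fst_add, hfst, Prod.smul_fst]
        show p.1 = p.1 + p.2 • (0 : Fin n → ℝ)
        rw [smul_zero, add_zero]
      · rw [Prod.snd_add, hsnd, Prod.smul_snd]
        show p.2 = 0 + p.2 • (1 : ℝ)
        rw [smul_eq_mul, mul_one, zero_add]
    have hlp : l p = (∑ j, p.1 j * l ((Pi.single j 1 : Fin n → ℝ), (0:ℝ))) + p.2 * s := by
      conv_lhs => rw [hdecomp]
      rw [map_add, map_sum, map_smul, smul_eq_mul]
      congr 1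
      exact Finset.sum_congr rfl fun j _ => by rw [map_smul, smul_eq_mul]
    have hsne : s ≠ 0 := ne_of_gt hs
    rw [phi, hlp]
    rw [add_div, Finset.sum_div]
    congr 1
    · refine Finset.sum_congr rfl fun j _ => ?_
      simp only [hx0]
      field_simp
    · field_simp
  refine ⟨x0, fun j hj => ?_⟩
  have h1 : g.pt j ∈ convexHull ℝ F :=
    subset_convexHull ℝ _ (Set.mem_insert_iff.2 (Or.inr ⟨j, hj, rfl⟩))
  have h2 : l v < l (g.pt j) := lt_trans hlv (hlF _ h1)
  have h3 : phi x0 v < phi x0 (g.pt j) := by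
    rw [hrep, hrep]
    gcongr
  rw [← g.phi_pt x0 i0, ← g.phi_pt x0 j]
  exact h3

/-- From the hypothesis that `phi x` is uniquely minimized at `pt i0` over `N(g)`,
derive strict minimality of the `i0`-th monomial. -/
lemma hyp_strict (g : TropPoly n) {x : Fin n → ℝ} {i0 : Fin g.k}
    (h1 : ∀ q ∈ g.newton, phi x (g.pt i0) ≤ phi x q)
    (h2 : ∀ q ∈ g.newton, (∀ r ∈ g.newton, phi x q ≤ phi x r) → q = g.pt i0) :
    ∀ j, j ≠ i0 → g.mono i0 x < g.mono j x := by
  intro j hj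
  have hle : g.mono i0 x ≤ g.mono j x := by
    have := h1 _ (g.pt_mem_newton j)
    rwa [g.phi_pt, g.phi_pt] at this
  rcases eq_or_lt_of_le hle with heq | hlt
  · exfalso
    have hmin : ∀ r ∈ g.newton, phi x (g.pt j) ≤ phi x r := by
      intro r hr
      rw [g.phi_pt, ← heq, ← g.phi_pt x i0]
      exact h1 r hr
    exact hj (g.pt_inj (h2 _ (g.pt_mem_newton j) hmin))
  · exact hlt

/-- Constancy of the strict `f`-argmin over the region where `g` has strict
argmin `i0`, assuming `Trop(f) ⊆ Trop(g)`. -/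
lemma argmin_const (f g : TropPoly n) (h : f.tropSet ⊆ g.tropSet)
    {i0 : Fin g.k} {i1 : Fin f.k} {x0 x : Fin n → ℝ}
    (hx0g : ∀ j, j ≠ i0 → g.mono i0 x0 < g.mono j x0)
    (hx0f : ∀ j, j ≠ i1 → f.mono i1 x0 < f.mono j x0)
    (hxg : ∀ j, j ≠ i0 → g.mono i0 x < g.mono j x) :
    ∀ j, j ≠ i1 → f.mono i1 x < f.mono j x := by
  classical
  set w : ℝ → (Fin n → ℝ) := fun t => (1 - t) • x0 + t • x with hw
  have hab : ∀ t : ℝ, (1 - t) + t = 1 := fun t => by ring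
  have hwg : ∀ t ∈ Set.Icc (0:ℝ) 1, ∀ j, j ≠ i0 → g.mono i0 (w t) < g.mono j (w t) := by
    intro t ht j hj
    have hA := hx0g j hj
    have hB := hxg j hj
    rw [show w t = (1-t) • x0 + t • x from rfl, g.mono_affine i0 x0 x (hab t),
      g.mono_affine j x0 x (hab t)]
    rcases lt_or_eq_of_le ht.1 with h2 | h2
    · have e1 := mul_lt_mul_of_pos_left hB h2
      have e2 := mul_le_mul_of_nonneg_left hA.le (by linarith [ht.2] : (0:ℝ) ≤ 1 - t)
      linarith
    · rw [← h2]
      norm_num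
      exact hA
  have hwf : ∀ t ∈ Set.Icc (0:ℝ) 1, w t ∉ f.tropSet := by
    intro t ht hc
    exact g.not_trop_of_strict (hwg t ht) (h hc)
  have hcont : ∀ j : Fin f.k, Continuous (fun t : ℝ => f.mono j (w t)) := by
    intro j
    have heq : (fun t : ℝ => f.mono j (w t)) =
        fun t => (1 - t) * f.mono j x0 + t * f.mono j x := by
      funext t
      exact f.mono_affine j x0 x (hab t)
    rw [heq]
    continuity
  set O : Set ℝ := ⋂ j : Fin f.k, {t : ℝ | j ≠ i1 → f.mono i1 (w t) < f.mono j (w t)}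
    with hO
  set C : Set ℝ := ⋂ j : Fin f.k, {t : ℝ | f.mono i1 (w t) ≤ f.mono j (w t)} with hC
  have hOopen : IsOpen O := by
    apply isOpen_iInter_of_finite
    intro j
    by_cases hj : j = i1
    · have : {t : ℝ | j ≠ i1 → f.mono i1 (w t) < f.mono j (w t)} = Set.univ := by
        ext t; simp [hj]
      rw [this]; exact isOpen_univ
    · have : {t : ℝ | j ≠ i1 → f.mono i1 (w t) < f.mono j (w t)} =
          {t : ℝ | f.mono i1 (w t) < f.mono j (w t)} := by
        ext t; simp [hj]
      rw [this]
      exact isOpen_lt (hcont i1) (hcont j)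
  have hCclosed : IsClosed C :=
    isClosed_iInter fun j => isClosed_le (hcont i1) (hcont j)
  have hOC : O ⊆ C := by
    intro t ht
    rw [Set.mem_iInter] at ht ⊢
    intro j
    by_cases hj : j = i1
    · rw [hj]
      show f.mono i1 (w t) ≤ f.mono i1 (w t)
      exact le_refl _
    · show f.mono i1 (w t) ≤ f.mono j (w t)
      exact (ht j hj).le
  have hsub : Set.Icc (0:ℝ) 1 ⊆ O ∪ Cᶜ := by
    intro t ht
    by_cases htC : t ∈ C
    · left
      obtain ⟨i', hi'⟩ := f.exists_strict_argmin (hwf t ht)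
      have hii : i' = i1 := by
        by_contra hne
        have h1 := hi' i1 (fun hh => hne hh.symm)
        have h2 := Set.mem_iInter.1 htC i'
        simp only [Set.mem_setOf_eq] at h2
        linarith
      rw [Set.mem_iInter]
      intro j
      rw [hii] at hi'
      exact fun hj => hi' j hj
    · right; exact htC
  have hdisj : Disjoint O Cᶜ :=
    Set.disjoint_left.2 fun t htO htC => htC (hOC htO)
  have h0 : (0:ℝ) ∈ Set.Icc (0:ℝ) 1 ∩ O := by
    refine ⟨⟨le_refl _, zero_le_one⟩, ?_⟩
    have hw0 : w 0 = x0 := by simp [hw]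
    rw [Set.mem_iInter]
    intro j
    simp only [Set.mem_setOf_eq]
    intro hj
    rw [hw0]
    exact hx0f j hj
  have hres := IsPreconnected.subset_left_of_subset_union hOopen hCclosed.isOpen_compl
    hdisj hsub ⟨0, h0⟩ isPreconnected_Icc
  have h1 : (1:ℝ) ∈ O := hres ⟨zero_le_one, le_refl _⟩
  have hw1 : w 1 = x := by simp [hw]
  rw [Set.mem_iInter] at h1
  intro j hj
  have := h1 j hj
  rwa [hw1] at this

end TropPoly

/-- if `Trop(f) ⊆ Trop(g)` and `v` is an extreme point of `N(g)`,
there is a unique point `u ∈ N(f)` such that for every `x` for which `φ_x`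
attains its minimum over `N(g)` at `v` and at no other point of `N(g)`,
the functional `φ_x` attains its minimum over `N(f)` at `u` and at no other
point of `N(f)`. -/
theorem unique_companion_vertex {n : ℕ} (f g : TropPoly n)
    (h : f.tropSet ⊆ g.tropSet) (v : (Fin n → ℝ) × ℝ)
    (hv : v ∈ Set.extremePoints ℝ g.newton) :
    ∃! u : (Fin n → ℝ) × ℝ, u ∈ f.newton ∧
      ∀ x : Fin n → ℝ,
        ((∀ q ∈ g.newton, phi x v ≤ phi x q) ∧
          (∀ q ∈ g.newton, (∀ r ∈ g.newton, phi x q ≤ phi x r) → q = v)) →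
        ((∀ q ∈ f.newton, phi x u ≤ phi x q) ∧
          (∀ q ∈ f.newton, (∀ r ∈ f.newton, phi x q ≤ phi x r) → q = u)) := by
  obtain ⟨i0, hvi⟩ := g.extreme_eq_pt hv
  have hv' : g.pt i0 ∈ Set.extremePoints ℝ g.newton := hvi ▸ hv
  obtain ⟨x0, hx0g⟩ := g.exists_exposing hv'
  have hx0nf : x0 ∉ f.tropSet := fun hc => g.not_trop_of_strict hx0g (h hc)
  obtain ⟨i1, hx0f⟩ := f.exists_strict_argmin hx0nf
  refine ⟨f.pt i1, ⟨f.pt_mem_newton i1, ?_⟩, ?_⟩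
  · -- the property
    intro x hx
    rw [hvi] at hx
    have hxg : ∀ j, j ≠ i0 → g.mono i0 x < g.mono j x := g.hyp_strict hx.1 hx.2
    have hxf : ∀ j, j ≠ i1 → f.mono i1 x < f.mono j x :=
      f.argmin_const g h hx0g hx0f hxg
    obtain ⟨P1, P2⟩ := f.strict_min_newton hxf
    refine ⟨P1, fun q hq hqmin => P2 q hq (hqmin _ (f.pt_mem_newton i1))⟩
  · -- uniqueness
    intro u' hu'
    obtain ⟨G1, G2⟩ := g.strict_min_newton hx0g
    have hhyp : (∀ q ∈ g.newton, phi x0 v ≤ phi x0 q) ∧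
        (∀ q ∈ g.newton, (∀ r ∈ g.newton, phi x0 q ≤ phi x0 r) → q = v) := by
      constructor
      · intro q hq; rw [hvi]; exact G1 q hq
      · intro q hq hqmin
        rw [hvi]
        exact G2 q hq (hqmin _ (g.pt_mem_newton i0))
    obtain ⟨Q1, Q2⟩ := hu'.2 x0 hhyp
    obtain ⟨P1, _⟩ := f.strict_min_newton hx0f
    exact (Q2 (f.pt i1) (f.pt_mem_newton i1) P1).symm
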